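/- REINFORCE-type gradient of the variational free energy: let S be a finite nonempty set, E : S → ℝ, β > 0, and let q : ℝ → S → ℝ be a parametrized family such that q(θ,s) > 0 for all θ and s, Σ_{s∈S} q(θ,s) = 1 for all θ, and for every s the map θ ↦ q(θ,s) is differentiable at θ₀. Then the function θ ↦ Σ_{s∈S} q(θ,s)·(E(s) + (1/β)·ln q(θ,s)) is differentiable at θ₀ and its derivative at θ₀ equals Σ_{s∈S} q(θ₀,s)·(E(s) + (1/β)·ln q(θ₀,s))·(q'(θ₀,s)/q(θ₀,s)), where q'(θ₀,s) denotes the derivative of θ ↦ q(θ,s) at θ₀ (so q'(θ₀,s)/q(θ₀,s) is the derivative of ln q(θ,s)). -/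

import Mathlib

/-- REINFORCE-type gradient of the variational free energy: for a parametrized
family of strictly positive probability distributions `q(θ,·)` on a finite
nonempty configuration space, each `θ ↦ q(θ,s)` differentiable at `θ₀`,
the variational free energy `θ ↦ Σ q(θ,s)·(E(s) + (1/β)·ln q(θ,s))` is
differentiable at `θ₀`, with derivative
`Σ q(θ₀,s)·(E(s) + (1/β)·ln q(θ₀,s))·(q'(θ₀,s)/q(θ₀,s))`. -/
theorem reinforce_gradient_variational_free_energy (S : Type*) [Fintype S] [Nonempty S]
    (E : S → ℝ) (β : ℝ) (hβ : 0 < β)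
    (q : ℝ → S → ℝ) (θ₀ : ℝ)
    (hqpos : ∀ θ s, 0 < q θ s)
    (hqsum : ∀ θ, ∑ s, q θ s = 1)
    (hdiff : ∀ s, DifferentiableAt ℝ (fun θ => q θ s) θ₀) :
    HasDerivAt (fun θ => ∑ s, q θ s * (E s + (1 / β) * Real.log (q θ s)))
      (∑ s, q θ₀ s * (E s + (1 / β) * Real.log (q θ₀ s)) *
        (deriv (fun θ => q θ s) θ₀ / q θ₀ s)) θ₀ := by
  set d : S → ℝ := fun s => deriv (fun θ => q θ s) θ₀ with hd
  have hds : ∀ s, HasDerivAt (fun θ => q θ s) (d s) θ₀ := fun s => (hdiff s).hasDerivAt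
  -- termwise derivative
  have hterm : ∀ s : S, HasDerivAt (fun θ => q θ s * (E s + (1 / β) * Real.log (q θ s)))
      (d s * (E s + (1 / β) * Real.log (q θ₀ s)) + (1 / β) * d s) θ₀ := by
    intro s
    have hlog : HasDerivAt (fun θ => Real.log (q θ s)) (d s / q θ₀ s) θ₀ := by
      have := (hds s).log (ne_of_gt (hqpos θ₀ s))
      simpa using this
    have h1 : HasDerivAt (fun θ => E s + (1 / β) * Real.log (q θ s))
        ((1 / β) * (d s / q θ₀ s)) θ₀ := ((hlog.const_mul (1 / β)).const_add (E s))
    have := (hds s).fun_mul h1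
    refine this.congr_deriv ?_
    have hq := ne_of_gt (hqpos θ₀ s)
    have hb := ne_of_gt hβ
    rw [mul_left_comm (q θ₀ s), mul_div_cancel₀ (d s) hq]
  have hsum : HasDerivAt (fun θ => ∑ s, q θ s * (E s + (1 / β) * Real.log (q θ s)))
      (∑ s, (d s * (E s + (1 / β) * Real.log (q θ₀ s)) + (1 / β) * d s)) θ₀ :=
    HasDerivAt.fun_sum fun s _ => hterm s
  -- Σ d s = 0
  have hdsum : ∑ s, d s = 0 := by
    have h1 : HasDerivAt (fun θ => ∑ s, q θ s) (∑ s, d s) θ₀ :=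
      HasDerivAt.fun_sum fun s _ => hds s
    have h2 : HasDerivAt (fun _ : ℝ => (1 : ℝ)) 0 θ₀ := hasDerivAt_const θ₀ 1
    have heq : (fun θ => ∑ s, q θ s) = fun _ : ℝ => (1 : ℝ) := funext fun θ => hqsum θ
    rw [heq] at h1
    exact h1.unique h2
  convert hsum using 1
  rw [Finset.sum_add_distrib, ← Finset.mul_sum, hdsum, mul_zero, add_zero]
  apply Finset.sum_congr rfl
  intro s _
  have := ne_of_gt (hqpos θ₀ s)
  field_simp
  ring
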